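/- Let S be a nonempty finite set and n a natural number. Let p and q be probability mass functions on (Fin n → S) × S whose marginals on the first coordinate agree, i.e., for every s̄ : Fin n → S, ∑_{s ∈ S} p(s̄, s) = ∑_{s ∈ S} q(s̄, s). Then there exists a probability mass function r on (Fin n → S) × S × S such that: (i) for all s̄ and s₁, ∑_{s₂ ∈ S} r(s̄, s₁, s₂) = p(s̄, s₁); (ii) for all s̄ and s₂, ∑_{s₁ ∈ S} r(s̄, s₁, s₂) = q(s̄, s₂); and (iii) ∑_{s̄} ∑_{s₁ ≠ s₂} r(s̄, s₁, s₂) ≤ (1/2) ∑_{s̄} ∑_{s ∈ S} |p(s̄, s) − q(s̄, s)|. (This is the bounded amalgamation property for finite stochastic processes: two processes agreeing on the tuple indexed by s̄ can be amalgamated with the two new points close together.) -/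

import Mathlib

open scoped BigOperators

open ENNReal in
/-- Bounded amalgamation for finite stochastic processes: if two probability mass functions
on `(Fin n → S) × S` have the same marginal on the first coordinate, they can be coupled by a
pmf on `(Fin n → S) × S × S` whose two marginals recover them, and in which the probability
that the two new coordinates differ is at most half the `ℓ¹` distance between the pmfs. -/
theorem stochastic_process_bounded_amalgamation
    {S : Type*} [Fintype S] [Nonempty S] [DecidableEq S] (n : ℕ)
    (p q : PMF ((Fin n → S) × S))
    (hmarg : ∀ sb : Fin n → S, ∑ s : S, p (sb, s) = ∑ s : S, q (sb, s)) :
    ∃ r : PMF ((Fin n → S) × S × S),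
      (∀ (sb : Fin n → S) (s₁ : S), ∑ s₂ : S, r (sb, s₁, s₂) = p (sb, s₁)) ∧
      (∀ (sb : Fin n → S) (s₂ : S), ∑ s₁ : S, r (sb, s₁, s₂) = q (sb, s₂)) ∧
      (∑ sb : Fin n → S, ∑ s₁ : S, ∑ s₂ : S,
          (if s₁ ≠ s₂ then (r (sb, s₁, s₂)).toReal else 0))
        ≤ (1 / 2) * ∑ sb : Fin n → S, ∑ s : S,
            |(p (sb, s)).toReal - (q (sb, s)).toReal| := by
  classical
  set m : (Fin n → S) → S → ℝ≥0∞ := fun sb s => min (p (sb, s)) (q (sb, s)) with hm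
  set A : (Fin n → S) → S → ℝ≥0∞ := fun sb s => p (sb, s) - m sb s with hA
  set B : (Fin n → S) → S → ℝ≥0∞ := fun sb s => q (sb, s) - m sb s with hB
  set d : (Fin n → S) → ℝ≥0∞ := fun sb => ∑ s, A sb s with hd
  have hAfin : ∀ sb s, A sb s ≠ ∞ := fun sb s =>
    (tsub_le_self.trans_lt (p.apply_lt_top _)).ne
  have hBfin : ∀ sb s, B sb s ≠ ∞ := fun sb s =>
    (tsub_le_self.trans_lt (q.apply_lt_top _)).ne
  have hmfin : ∀ sb s, m sb s ≠ ∞ := fun sb s =>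
    ((min_le_left _ _).trans_lt (p.apply_lt_top _)).ne
  have hdfin : ∀ sb, d sb ≠ ∞ := fun sb =>
    (ENNReal.sum_lt_top.2 fun s _ => (hAfin sb s).lt_top).ne
  have hAp : ∀ sb s, m sb s + A sb s = p (sb, s) := fun sb s =>
    add_tsub_cancel_of_le (min_le_left _ _)
  have hBq : ∀ sb s, m sb s + B sb s = q (sb, s) := fun sb s =>
    add_tsub_cancel_of_le (min_le_right _ _)
  have hdB : ∀ sb, ∑ s, B sb s = d sb := by
    intro sb
    have h1 : ∑ s, m sb s + ∑ s, A sb s = ∑ s, p (sb, s) := by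
      rw [← Finset.sum_add_distrib]; exact Finset.sum_congr rfl fun s _ => hAp sb s
    have h2 : ∑ s, m sb s + ∑ s, B sb s = ∑ s, q (sb, s) := by
      rw [← Finset.sum_add_distrib]; exact Finset.sum_congr rfl fun s _ => hBq sb s
    have hmtop : (∑ s, m sb s) ≠ ∞ :=
      (ENNReal.sum_lt_top.2 fun s _ => (hmfin sb s).lt_top).ne
    have := h2.trans ((hmarg sb).symm.trans h1.symm)
    exact WithTop.add_left_cancel hmtop this
  set f : ((Fin n → S) × S × S) → ℝ≥0∞ :=
    fun x => (if x.2.1 = x.2.2 then m x.1 x.2.1 else 0)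
      + A x.1 x.2.1 * B x.1 x.2.2 / d x.1 with hf
  have hA_le_d : ∀ sb s, A sb s ≤ d sb := fun sb s =>
    Finset.single_le_sum (fun s _ => zero_le) (Finset.mem_univ s)
  have hB_le_d : ∀ sb s, B sb s ≤ d sb := fun sb s => by
    rw [← hdB sb]; exact Finset.single_le_sum (fun s _ => zero_le) (Finset.mem_univ s)
  -- first marginal
  have marg1 : ∀ sb s₁, ∑ s₂, f (sb, s₁, s₂) = p (sb, s₁) := by
    intro sb s₁
    have : ∑ s₂, f (sb, s₁, s₂)
        = m sb s₁ + A sb s₁ * d sb / d sb := by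
      rw [hf]
      simp only [Finset.sum_add_distrib, Finset.sum_ite_eq, Finset.mem_univ, if_true]
      congr 1
      simp only [div_eq_mul_inv, ← Finset.sum_mul, ← Finset.mul_sum, hdB sb]
    rw [this]
    rcases eq_or_ne (d sb) 0 with h0 | h0
    · have hA0 : A sb s₁ = 0 := le_antisymm (h0 ▸ hA_le_d sb s₁) zero_le
      have : m sb s₁ = p (sb, s₁) := by
        have := hAp sb s₁; rwa [hA0, add_zero] at this
      rw [hA0, zero_mul, ENNReal.zero_div, add_zero, this]
    · rw [mul_div_assoc, ENNReal.div_self h0 (hdfin sb), mul_one, hAp]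
  have marg2 : ∀ sb s₂, ∑ s₁, f (sb, s₁, s₂) = q (sb, s₂) := by
    intro sb s₂
    have : ∑ s₁, f (sb, s₁, s₂)
        = m sb s₂ + d sb * B sb s₂ / d sb := by
      rw [hf]
      simp only [Finset.sum_add_distrib, Finset.sum_ite_eq', Finset.mem_univ, if_true]
      congr 1
      simp only [div_eq_mul_inv, ← Finset.sum_mul]
      rfl
    rw [this]
    rcases eq_or_ne (d sb) 0 with h0 | h0
    · have hB0 : B sb s₂ = 0 := le_antisymm (h0 ▸ hB_le_d sb s₂) zero_le
      have : m sb s₂ = q (sb, s₂) := by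
        have := hBq sb s₂; rwa [hB0, add_zero] at this
      rw [hB0, mul_zero, ENNReal.zero_div, add_zero, this]
    · rw [mul_comm (d sb), mul_div_assoc, ENNReal.div_self h0 (hdfin sb), mul_one, hBq]
  have hsum1 : ∑ x : (Fin n → S) × S × S, f x = 1 := by
    rw [Fintype.sum_prod_type]
    have : ∀ sb : Fin n → S, ∑ y : S × S, f (sb, y) = ∑ s : S, p (sb, s) := by
      intro sb
      rw [Fintype.sum_prod_type]
      exact Finset.sum_congr rfl fun s₁ _ => marg1 sb s₁
    rw [Finset.sum_congr rfl fun sb _ => this sb, ← Fintype.sum_prod_type,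
      ← tsum_fintype (L := .unconditional _)]
    exact p.tsum_coe
  refine ⟨PMF.ofFintype f hsum1, fun sb s₁ => by
      simpa [PMF.ofFintype_apply] using marg1 sb s₁,
    fun sb s₂ => by simpa [PMF.ofFintype_apply] using marg2 sb s₂, ?_⟩
  simp only [PMF.ofFintype_apply]
  -- pointwise abs identity
  have habs : ∀ sb s, |(p (sb, s)).toReal - (q (sb, s)).toReal|
      = (A sb s).toReal + (B sb s).toReal := by
    intro sb s
    rcases le_total (p (sb, s)) (q (sb, s)) with h | h
    · have hmp : m sb s = p (sb, s) := min_eq_left h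
      have hA0 : A sb s = 0 := by
        show p (sb, s) - m sb s = 0; rw [hmp, tsub_self]
      have : B sb s = q (sb, s) - p (sb, s) := by
        show q (sb, s) - m sb s = _; rw [hmp]
      rw [hA0, this, ENNReal.toReal_sub_of_le h (q.apply_ne_top _)]
      rw [abs_of_nonpos (by simp [ENNReal.toReal_le_toReal (p.apply_ne_top _) (q.apply_ne_top _), h])]
      simp
    · have hmq : m sb s = q (sb, s) := min_eq_right h
      have hB0 : B sb s = 0 := by
        show q (sb, s) - m sb s = 0; rw [hmq, tsub_self]
      have : A sb s = p (sb, s) - q (sb, s) := by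
        show p (sb, s) - m sb s = _; rw [hmq]
      rw [hB0, this, ENNReal.toReal_sub_of_le h (p.apply_ne_top _)]
      rw [abs_of_nonneg (by simp [sub_nonneg, ENNReal.toReal_le_toReal (q.apply_ne_top _) (p.apply_ne_top _), h])]
      simp
  have hRHS : ∀ sb, ∑ s, |(p (sb, s)).toReal - (q (sb, s)).toReal|
      = 2 * (d sb).toReal := by
    intro sb
    rw [Finset.sum_congr rfl fun s _ => habs sb s, Finset.sum_add_distrib,
      ← ENNReal.toReal_sum (fun s _ => hAfin sb s),
      ← ENNReal.toReal_sum (fun s _ => hBfin sb s), hdB sb, show (∑ s : S, A sb s) = d sb from rfl]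
    ring
  have hterm_fin : ∀ sb s₁ s₂, A sb s₁ * B sb s₂ / d sb ≠ ∞ := by
    intro sb s₁ s₂
    rcases eq_or_ne (d sb) 0 with h0 | h0
    · have hA0 : A sb s₁ = 0 := le_antisymm (h0 ▸ hA_le_d sb s₁) zero_le
      simp [hA0]
    · exact (ENNReal.div_lt_top (ENNReal.mul_ne_top (hAfin sb s₁) (hBfin sb s₂)) h0).ne
  have hLHS : ∀ sb, ∑ s₁, ∑ s₂, (if s₁ ≠ s₂ then (f (sb, s₁, s₂)).toReal else 0)
      ≤ (d sb).toReal := by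
    intro sb
    have step1 : ∑ s₁, ∑ s₂, (if s₁ ≠ s₂ then (f (sb, s₁, s₂)).toReal else 0)
        ≤ ∑ s₁, ∑ s₂, (A sb s₁ * B sb s₂ / d sb).toReal := by
      refine Finset.sum_le_sum fun s₁ _ => Finset.sum_le_sum fun s₂ _ => ?_
      by_cases h : s₁ = s₂
      · simp only [h, ne_eq, not_true_eq_false, if_false]
        exact ENNReal.toReal_nonneg
      · simp [hf, h]
    have step2 : ∑ s₁, ∑ s₂, (A sb s₁ * B sb s₂ / d sb).toReal
        = (∑ s₁, ∑ s₂, A sb s₁ * B sb s₂ / d sb).toReal := by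
      rw [ENNReal.toReal_sum (fun s₁ _ => (ENNReal.sum_lt_top.2 fun s₂ _ =>
        (hterm_fin sb s₁ s₂).lt_top).ne)]
      exact Finset.sum_congr rfl fun s₁ _ =>
        (ENNReal.toReal_sum fun s₂ _ => hterm_fin sb s₁ s₂).symm
    have step3 : ∑ s₁, ∑ s₂, A sb s₁ * B sb s₂ / d sb ≤ d sb := by
      have : ∑ s₁, ∑ s₂, A sb s₁ * B sb s₂ / d sb
          = d sb * (d sb * (d sb)⁻¹) := by
        simp only [div_eq_mul_inv, ← Finset.sum_mul, ← Finset.mul_sum, hdB]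
        ring
      rw [this]
      calc d sb * (d sb * (d sb)⁻¹) ≤ d sb * 1 :=
            mul_le_mul_of_nonneg_left (ENNReal.mul_inv_le_one _) zero_le
        _ = d sb := mul_one _
    calc ∑ s₁, ∑ s₂, (if s₁ ≠ s₂ then (f (sb, s₁, s₂)).toReal else 0)
        ≤ (∑ s₁, ∑ s₂, A sb s₁ * B sb s₂ / d sb).toReal := step1.trans_eq step2
      _ ≤ (d sb).toReal := ENNReal.toReal_mono (hdfin sb) step3
  calc ∑ sb : Fin n → S, ∑ s₁, ∑ s₂, (if s₁ ≠ s₂ then (f (sb, s₁, s₂)).toReal else 0)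
      ≤ ∑ sb : Fin n → S, (d sb).toReal := Finset.sum_le_sum fun sb _ => hLHS sb
    _ = (1/2) * ∑ sb : Fin n → S, ∑ s, |(p (sb, s)).toReal - (q (sb, s)).toReal| := by
        rw [Finset.sum_congr rfl fun sb _ => hRHS sb, Finset.mul_sum]
        exact Finset.sum_congr rfl fun sb _ => by ring
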